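/- Let C be an algebraically closed field of characteristic zero and σ the automorphism of C(x) given by x ↦ x + 1. If g ∈ C(x) is nonzero, squarefree (as a rational function, i.e., every zero and pole of g is simple), and g·σ(g) is a square in C(x), then g is a constant. -/

import Mathlib

open Polynomial

noncomputable def myord {C : Type*} [Field C] (g : RatFunc C) (d : C) : ℤ :=
  (g.num.rootMultiplicity d : ℤ) - g.denom.rootMultiplicity d

theorem myord_eq {C : Type*} [Field C] (g : RatFunc C) (hg : g ≠ 0)
    (a b : Polynomial C) (ha : a ≠ 0) (hb : b ≠ 0)
    (h : g = algebraMap _ _ a / algebraMap _ _ b) (d : C) :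
    myord g d = (a.rootMultiplicity d : ℤ) - b.rootMultiplicity d := by
  have hnum : g.num ≠ 0 := RatFunc.num_ne_zero hg
  have hden : g.denom ≠ 0 := g.denom_ne_zero
  have key : g.num * b = g.denom * a := by
    apply RatFunc.algebraMap_injective C
    have h2 : (algebraMap (Polynomial C) (RatFunc C) g.num) / algebraMap _ _ g.denom
        = algebraMap _ _ a / algebraMap _ _ b := by rw [g.num_div_denom, h]
    rw [div_eq_div_iff (RatFunc.algebraMap_ne_zero hden) (RatFunc.algebraMap_ne_zero hb)] at h2
    rw [map_mul, map_mul, h2]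
    ring
  have := congrArg (fun p => (Polynomial.rootMultiplicity d p : ℤ)) key
  simp only [Polynomial.rootMultiplicity_mul (mul_ne_zero hnum hb),
    Polynomial.rootMultiplicity_mul (mul_ne_zero hden ha)] at this
  unfold myord
  push_cast at this ⊢
  omega

theorem myord_mul {C : Type*} [Field C] (g h : RatFunc C) (hg : g ≠ 0) (hh : h ≠ 0) (d : C) :
    myord (g * h) d = myord g d + myord h d := by
  have hnum := RatFunc.num_ne_zero hg
  have hden := g.denom_ne_zero
  have hnum' := RatFunc.num_ne_zero hh
  have hden' := h.denom_ne_zero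
  rw [myord_eq (g*h) (mul_ne_zero hg hh) (g.num * h.num) (g.denom * h.denom)
    (mul_ne_zero hnum hnum') (mul_ne_zero hden hden') ?_ d]
  · rw [Polynomial.rootMultiplicity_mul (mul_ne_zero hnum hnum'),
      Polynomial.rootMultiplicity_mul (mul_ne_zero hden hden')]
    unfold myord; push_cast; ring
  · rw [map_mul, map_mul, ← div_mul_div_comm, g.num_div_denom, h.num_div_denom]

theorem rm_shift {C : Type*} [Field C] (p : Polynomial C) (d : C) :
    (p.comp (X + Polynomial.C 1)).rootMultiplicity d = p.rootMultiplicity (d + 1) := by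
  rw [Polynomial.rootMultiplicity_eq_natTrailingDegree,
      Polynomial.rootMultiplicity_eq_natTrailingDegree,
      ← Polynomial.taylor_apply, ← Polynomial.taylor_apply, ← Polynomial.taylor_apply,
      Polynomial.taylor_taylor, add_comm d 1]

theorem comp_ne_zero' {C : Type*} [Field C] {p : Polynomial C} (hp : p ≠ 0) :
    p.comp (X + Polynomial.C 1) ≠ 0 := by
  intro h
  apply hp
  rw [← Polynomial.taylor_apply] at h
  have := congrArg (Polynomial.taylor (-1 : C)) h
  rw [Polynomial.taylor_taylor] at this
  simpa [Polynomial.taylor_apply] using this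

theorem sigma_algebraMap {C : Type*} [Field C]
    (σ : RatFunc C ≃ₐ[C] RatFunc C) (hσ : σ RatFunc.X = RatFunc.X + 1) (p : Polynomial C) :
    σ (algebraMap (Polynomial C) (RatFunc C) p)
      = algebraMap _ _ (p.comp (X + Polynomial.C 1)) := by
  have : (σ.toAlgHom.comp (IsScalarTower.toAlgHom C (Polynomial C) (RatFunc C)))
      = (IsScalarTower.toAlgHom C (Polynomial C) (RatFunc C)).comp
          (Polynomial.taylorAlgHom 1) := by
    apply Polynomial.algHom_ext
    simp [Polynomial.coe_taylorAlgHom, Polynomial.taylor_apply, RatFunc.algebraMap_X,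
      RatFunc.algebraMap_C, hσ]
  have h2 := congrArg (fun f => f p) (congrArg DFunLike.coe this)
  simpa [Polynomial.coe_taylorAlgHom, Polynomial.taylor_apply] using h2

theorem stmt_5 {C : Type*} [Field C] [CharZero C] [IsAlgClosed C]
    (σ : RatFunc C ≃ₐ[C] RatFunc C) (hσ : σ RatFunc.X = RatFunc.X + 1)
    (g : RatFunc C) (hg : g ≠ 0)
    (hsf : ∀ d : C, ((g.num.rootMultiplicity d : ℤ) - (g.denom.rootMultiplicity d : ℤ))
        ∈ ({-1, 0, 1} : Set ℤ))
    (hsq : ∃ q : RatFunc C, g * σ g = q ^ 2) :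
    ∃ c : C, g = RatFunc.C c := by
  obtain ⟨q, hq⟩ := hsq
  have hσg : σ g ≠ 0 := fun h => hg (by simpa using σ.injective (h.trans (map_zero σ).symm))
  have hq0 : q ≠ 0 := by
    rintro rfl
    exact mul_ne_zero hg hσg (by simpa using hq)
  have hnum : g.num ≠ 0 := RatFunc.num_ne_zero hg
  have hden : g.denom ≠ 0 := g.denom_ne_zero
  -- ord of σ g
  have hshift : ∀ d : C, myord (σ g) d = myord g (d + 1) := by
    intro d
    rw [myord_eq (σ g) hσg (g.num.comp (X + Polynomial.C 1))
      (g.denom.comp (X + Polynomial.C 1)) (comp_ne_zero' hnum) (comp_ne_zero' hden) ?_ d,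
      rm_shift, rm_shift]
    · rfl
    · conv_lhs => rw [← g.num_div_denom]
      rw [map_div₀, sigma_algebraMap σ hσ, sigma_algebraMap σ hσ]
  have hmem : ∀ d : C, myord g d ∈ ({-1, 0, 1} : Set ℤ) := hsf
  have hmul : ∀ d : C, myord g d + myord g (d + 1) = 2 * myord q d := by
    intro d
    have h1 : myord (g * σ g) d = myord g d + myord (σ g) d := myord_mul _ _ hg hσg d
    rw [hq, sq, myord_mul q q hq0 hq0, hshift] at h1
    omega
  have hstep : ∀ d : C, myord g d ≠ 0 → myord g (d + 1) ≠ 0 := by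
    intro d h0
    have h1 := hmul d
    have a := hmem d
    have b := hmem (d + 1)
    simp only [Set.mem_insert_iff, Set.mem_singleton_iff] at a b
    omega
  have hzero : ∀ d : C, myord g d = 0 := by
    by_contra hcon
    push_neg at hcon
    obtain ⟨d0, hd0⟩ := hcon
    have hall : ∀ n : ℕ, myord g (d0 + n) ≠ 0 := by
      intro n
      induction n with
      | zero => simpa using hd0
      | succ n ih =>
        have h := hstep (d0 + n) ih
        convert h using 2
        push_cast
        ring
    have hroots : ∀ n : ℕ, (g.num * g.denom).IsRoot (d0 + n) := by
      intro n
      have h := hall n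
      have h' : g.num.rootMultiplicity (d0 + n) ≠ 0 ∨
          g.denom.rootMultiplicity (d0 + n) ≠ 0 := by
        unfold myord at h; omega
      simp only [Polynomial.IsRoot, Polynomial.eval_mul, mul_eq_zero]
      rcases h' with h' | h'
      · exact Or.inl ((Polynomial.rootMultiplicity_pos hnum).1 (Nat.pos_of_ne_zero h'))
      · exact Or.inr ((Polynomial.rootMultiplicity_pos hden).1 (Nat.pos_of_ne_zero h'))
    have hinj : Function.Injective (fun n : ℕ => d0 + (n : C)) := by
      intro m n h
      simp only [add_right_inj] at h
      exact_mod_cast h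
    have hinf : Set.Infinite (Set.range fun n : ℕ => d0 + (n : C)) :=
      Set.infinite_range_of_injective hinj
    exact hinf ((Polynomial.finite_setOf_isRoot (mul_ne_zero hnum hden)).subset
      (by rintro _ ⟨n, rfl⟩; exact hroots n))
  have hnoroot : ∀ d : C, ¬ g.num.IsRoot d := by
    intro d hr
    have h1 : 0 < g.num.rootMultiplicity d := (Polynomial.rootMultiplicity_pos hnum).2 hr
    have h0 := hzero d
    unfold myord at h0
    have h2 : 0 < g.denom.rootMultiplicity d := by omega
    have hd1 : (X - Polynomial.C d) ∣ g.num := Polynomial.dvd_iff_isRoot.2 hr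
    have hd2 : (X - Polynomial.C d) ∣ g.denom :=
      Polynomial.dvd_iff_isRoot.2 ((Polynomial.rootMultiplicity_pos hden).1 h2)
    exact Polynomial.not_isUnit_X_sub_C d ((g.isCoprime_num_denom).isUnit_of_dvd' hd1 hd2)
  have hnodroot : ∀ d : C, ¬ g.denom.IsRoot d := by
    intro d hr
    have h2 : 0 < g.denom.rootMultiplicity d := (Polynomial.rootMultiplicity_pos hden).2 hr
    have h0 := hzero d
    unfold myord at h0
    have h1 : 0 < g.num.rootMultiplicity d := by omega
    exact hnoroot d ((Polynomial.rootMultiplicity_pos hnum).1 h1)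
  have hnd : g.num.natDegree = 0 := by
    by_contra h
    obtain ⟨x, hx⟩ := IsAlgClosed.exists_root g.num (by
      rw [Polynomial.degree_eq_natDegree hnum]
      exact_mod_cast h)
    exact hnoroot x hx
  have hnd' : g.denom.natDegree = 0 := by
    by_contra h
    obtain ⟨x, hx⟩ := IsAlgClosed.exists_root g.denom (by
      rw [Polynomial.degree_eq_natDegree hden]
      exact_mod_cast h)
    exact hnodroot x hx
  refine ⟨g.num.coeff 0 / g.denom.coeff 0, ?_⟩
  conv_lhs => rw [← g.num_div_denom]
  rw [Polynomial.eq_C_of_natDegree_eq_zero hnd, Polynomial.eq_C_of_natDegree_eq_zero hnd',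
    RatFunc.algebraMap_C, RatFunc.algebraMap_C, map_div₀]
  simp
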